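/- Corollary (decay of the localization radii). Let j ≥ 1 be an integer and suppose K : [0,2π] → ℂ is j times continuously differentiable with K^{(i)}(0) = K^{(i)}(2π) for all 0 ≤ i ≤ j − 1. Then |n|^j · |aₙ(K)| → 0 as |n| → ∞. Consequently there exist N ∈ ℕ and, for each n ∈ ℤ with |n| ≥ N, a zero λₙ of Φ with |λₙ − n| ≤ |aₙ(K)|, which is the unique zero of Φ in the disk {λ : |λ − n| < |aₙ(K)|} when aₙ(K) ≠ 0 (and λₙ = n when aₙ(K) = 0); in particular |n|^j · |λₙ − n| → 0 as |n| → ∞. -/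

import Mathlib

set_option maxHeartbeats 1000000

open MeasureTheory Real Complex Filter FourierTransform intervalIntegral

/-- `Φ(λ) = 1 − e^{2πiλ} + i ∫₀^{2π} e^{iλt} K(t) dt`. -/
noncomputable def Phi (K : ℝ → ℂ) (lam : ℂ) : ℂ :=
  1 - Complex.exp (2 * Real.pi * Complex.I * lam)
    + Complex.I * ∫ t in (0:ℝ)..(2 * Real.pi), Complex.exp (Complex.I * lam * t) * K t

/-- `aₙ(K) = (2π)^{−1/2} ∫₀^{2π} e^{int} K(t) dt`. -/
noncomputable def aCoeff (K : ℝ → ℂ) (n : ℤ) : ℂ :=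
  (Real.sqrt (2 * Real.pi))⁻¹ * ∫ t in (0:ℝ)..(2 * Real.pi), Complex.exp (Complex.I * n * t) * K t


lemma mvt_complex {f f' : ℂ → ℂ} {s : Set ℂ} {C : ℝ} (hs : Convex ℝ s)
    (hd : ∀ x ∈ s, HasDerivAt f (f' x) x) (hC : ∀ x ∈ s, ‖f' x‖ ≤ C)
    {a b : ℂ} (ha : a ∈ s) (hb : b ∈ s) :
    ‖f b - f a‖ ≤ C * ‖b - a‖ := by
  have := Convex.norm_image_sub_le_of_norm_hasFDerivWithin_le
    (f' := fun x => ContinuousLinearMap.restrictScalars ℝ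
      ((1 : ℂ →L[ℂ] ℂ).smulRight (f' x)))
    (fun x hx => (((hd x hx).hasFDerivAt).restrictScalars ℝ).hasFDerivWithinAt)
    (fun x hx => by
      rw [ContinuousLinearMap.norm_restrictScalars, ContinuousLinearMap.norm_smulRight_apply]
      simpa using hC x hx) hs ha hb
  simpa using this

lemma exp_lip {a b : ℂ} {ρ : ℝ} (ha : ‖a‖ ≤ ρ) (hb : ‖b‖ ≤ ρ) :
    ‖Complex.exp a - Complex.exp b‖ ≤ Real.exp ρ * ‖a - b‖ := by
  refine mvt_complex (convex_closedBall (0:ℂ) ρ) (fun x _ => Complex.hasDerivAt_exp x)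
    (fun x hx => ?_) ?_ ?_
  · rw [Complex.norm_exp]
    exact Real.exp_le_exp.2 ((Complex.re_le_norm x).trans
      (by simpa [Complex.dist_eq] using hx))
  · simpa [Metric.mem_closedBall, Complex.dist_eq] using hb
  · simpa [Metric.mem_closedBall, Complex.dist_eq] using ha

lemma exp_one_lip (z : ℂ) : ‖Complex.exp z - 1‖ ≤ ‖z‖ * Real.exp (‖z‖) := by
  have := exp_lip (a := z) (b := 0) (ρ := ‖z‖) le_rfl (by simp)
  simpa [mul_comm] using this

lemma exp_taylor {a b : ℂ} {ρ : ℝ} (hρ : 0 ≤ ρ) (ha : ‖a‖ ≤ ρ) (hb : ‖b‖ ≤ ρ) :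
    ‖Complex.exp a - Complex.exp b - (a - b)‖ ≤ ρ * Real.exp ρ * ‖a - b‖ := by
  have key : ∀ x ∈ Metric.closedBall (0:ℂ) ρ,
      ‖Complex.exp x - 1‖ ≤ ρ * Real.exp ρ := by
    intro x hx
    have hxρ : ‖x‖ ≤ ρ := by simpa [Metric.mem_closedBall, Complex.dist_eq] using hx
    exact (exp_one_lip x).trans (mul_le_mul hxρ (Real.exp_le_exp.2 hxρ) (Real.exp_pos _).le hρ)
  have := mvt_complex (f := fun z => Complex.exp z - z) (f' := fun z => Complex.exp z - 1)
    (convex_closedBall (0:ℂ) ρ)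
    (fun x _ => (Complex.hasDerivAt_exp x).sub (hasDerivAt_id x)) key
    (a := b) (b := a)
    (by simpa [Metric.mem_closedBall, Complex.dist_eq] using hb)
    (by simpa [Metric.mem_closedBall, Complex.dist_eq] using ha)
  calc ‖Complex.exp a - Complex.exp b - (a - b)‖
      = ‖(Complex.exp a - a) - (Complex.exp b - b)‖ := by ring_nf
    _ ≤ ρ * Real.exp ρ * ‖a - b‖ := this


lemma RL (g : ℝ → ℂ) :
    Tendsto (fun n : ℤ => ∫ t in (0:ℝ)..(2*π), Complex.exp (Complex.I*n*t) * g t)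
      cofinite (nhds 0) := by
  set c : ℝ := -(2*π)⁻¹ with hc
  have hcne : c ≠ 0 := by
    simp [hc]
  set f : ℝ → ℂ := Set.indicator (Set.Icc 0 (2*π)) g with hf
  have h1 : Tendsto (fun w : ℝ => ∫ v : ℝ, 𝐞 (-(v * w)) • f v) (cocompact ℝ) (nhds 0) :=
    Real.tendsto_integral_exp_smul_cocompact f
  have h2 : Tendsto (fun n : ℤ => c * (n:ℝ)) cofinite (cocompact ℝ) := by
    have := (Homeomorph.mulLeft₀ c hcne).toCocompactMap.cocompact_tendsto'
    exact this.comp Int.tendsto_coe_cofinite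
  have h3 := h1.comp h2
  have key : ∀ n : ℤ, (∫ v : ℝ, 𝐞 (-(v * (c * (n:ℝ)))) • f v)
      = ∫ t in (0:ℝ)..(2*π), Complex.exp (Complex.I*n*t) * g t := by
    intro n
    have hind : (fun v : ℝ => 𝐞 (-(v * (c * (n:ℝ)))) • f v)
        = Set.indicator (Set.Icc 0 (2*π)) (fun v => Complex.exp (Complex.I*n*v) * g v) := by
      funext v
      by_cases hv : v ∈ Set.Icc 0 (2*π)
      · rw [Set.indicator_of_mem hv, hf, Set.indicator_of_mem hv, Circle.smul_def,
          Real.fourierChar_apply]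
        congr 1
        have : 2 * π * -(v * (c * (n:ℝ))) = (n:ℝ) * v := by
          field_simp [hc]
          rw [hc]; field_simp
        rw [this]
        push_cast
        ring_nf
      · rw [Set.indicator_of_notMem hv, hf, Set.indicator_of_notMem hv, smul_zero]
    rw [hind, MeasureTheory.integral_indicator measurableSet_Icc,
      intervalIntegral.integral_of_le (by positivity : (0:ℝ) ≤ 2*π),
      ← MeasureTheory.integral_Icc_eq_integral_Ioc]
  have : (fun n : ℤ => ∫ t in (0:ℝ)..(2*π), Complex.exp (Complex.I*n*t) * g t)
      = (fun w : ℝ => ∫ v : ℝ, 𝐞 (-(v * w)) • f v) ∘ (fun n : ℤ => c * (n:ℝ)) := by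
    funext n; exact (key n).symm
  rw [this]
  exact h3


lemma ibp (f f' : ℝ → ℂ) (hf : ContinuousOn f (Set.Icc 0 (2*π)))
    (hf' : ContinuousOn f' (Set.Icc 0 (2*π)))
    (hd : ∀ x ∈ Set.Ioo (0:ℝ) (2*π), HasDerivAt f (f' x) x)
    (hper : f 0 = f (2*π)) (n : ℤ) :
    (Complex.I*n) * ∫ t in (0:ℝ)..(2*π), Complex.exp (Complex.I*n*t) * f t
      = - ∫ t in (0:ℝ)..(2*π), Complex.exp (Complex.I*n*t) * f' t := by
  have h2π : (0:ℝ) ≤ 2*π := by positivity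
  have hexpd : ∀ t : ℝ, HasDerivAt (fun t : ℝ => Complex.exp (Complex.I*n*t))
      (Complex.I*n * Complex.exp (Complex.I*n*t)) t := by
    intro t
    have h0 : HasDerivAt (fun t : ℝ => (Complex.I*n) * (t:ℂ)) (Complex.I*n) t := by
      simpa using (Complex.ofRealCLM.hasDerivAt (x := t)).const_mul (Complex.I*(n:ℂ))
    simpa [mul_comm] using h0.cexp
  have hcexp : Continuous fun t : ℝ => Complex.exp (Complex.I*n*t) :=
    Continuous.cexp (by continuity)
  set F : ℝ → ℂ := fun t => Complex.exp (Complex.I*n*t) * f t with hF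
  set Ψ : ℝ → ℂ := fun t => Complex.I*n * (Complex.exp (Complex.I*n*t) * f t)
      + Complex.exp (Complex.I*n*t) * f' t with hΨ
  have hΨcont : ContinuousOn Ψ (Set.Icc 0 (2*π)) := by
    apply ContinuousOn.add
    · exact ((hcexp.continuousOn.mul hf).const_smul (Complex.I*(n:ℂ))).congr (by
        intro x hx; simp [smul_eq_mul])
    · exact hcexp.continuousOn.mul hf'
  have hFd : ∀ x ∈ Set.Ioo (0:ℝ) (2*π), HasDerivWithinAt F (Ψ x) (Set.Ioi x) x := by
    intro x hx
    have := (hexpd x).mul (hd x hx)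
    refine HasDerivAt.hasDerivWithinAt ?_
    have e : Ψ x = Complex.I*n * Complex.exp (Complex.I*n*x) * f x
        + Complex.exp (Complex.I*n*x) * f' x := by simp only [hΨ]; ring
    rw [e]; exact this
  have hint : IntervalIntegrable Ψ volume 0 (2*π) :=
    hΨcont.intervalIntegrable_of_Icc h2π
  have hFc : ContinuousOn F (Set.Icc 0 (2*π)) := hcexp.continuousOn.mul hf
  have key := intervalIntegral.integral_eq_sub_of_hasDeriv_right_of_le h2π hFc hFd hint
  have hexp2π : Complex.exp (Complex.I*n*(2*(π:ℂ))) = 1 := by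
    have := Complex.exp_int_mul_two_pi_mul_I n
    rw [← this]
    congr 1
    push_cast
    ring
  have hF2π : F (2*π) - F 0 = 0 := by
    simp [hF, hexp2π, ← hper]
  rw [hF2π] at key
  have hsplit : ∫ t in (0:ℝ)..(2*π), Ψ t
      = (Complex.I*n) * (∫ t in (0:ℝ)..(2*π), Complex.exp (Complex.I*n*t) * f t)
        + ∫ t in (0:ℝ)..(2*π), Complex.exp (Complex.I*n*t) * f' t := by
    rw [hΨ]
    rw [intervalIntegral.integral_add
      (f := fun t => Complex.I*n * (Complex.exp (Complex.I*n*t) * f t))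
      (g := fun t => Complex.exp (Complex.I*n*t) * f' t)
      (((hcexp.continuousOn.mul hf).const_smul (Complex.I*(n:ℂ))).congr (by
        intro x hx; simp [smul_eq_mul]) |>.intervalIntegrable_of_Icc h2π)
      ((hcexp.continuousOn.mul hf').intervalIntegrable_of_Icc h2π),
      intervalIntegral.integral_const_mul]
  rw [hsplit] at key
  linear_combination key

lemma iterA (K : ℝ → ℂ) (j : ℕ) (hj : 1 ≤ j)
    (hK : ContDiffOn ℝ j K (Set.Icc 0 (2 * π)))
    (hper : ∀ i : ℕ, i ≤ j - 1 →
      iteratedDerivWithin i K (Set.Icc 0 (2 * π)) 0 =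
        iteratedDerivWithin i K (Set.Icc 0 (2 * π)) (2 * π)) (n : ℤ) :
    ∀ i ≤ j, (Complex.I*n)^i * ∫ t in (0:ℝ)..(2*π), Complex.exp (Complex.I*n*t) * K t
      = (-1)^i * ∫ t in (0:ℝ)..(2*π), Complex.exp (Complex.I*n*t)
          * iteratedDerivWithin i K (Set.Icc 0 (2*π)) t := by
  have huniq : UniqueDiffOn ℝ (Set.Icc (0:ℝ) (2*π)) :=
    uniqueDiffOn_Icc (by positivity)
  intro i hij
  induction i with
  | zero => simp
  | succ i ih =>
    have hi : i < j := Nat.lt_of_succ_le hij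
    have step := ibp (iteratedDerivWithin i K (Set.Icc 0 (2*π)))
      (iteratedDerivWithin (i+1) K (Set.Icc 0 (2*π)))
      (hK.continuousOn_iteratedDerivWithin (by exact_mod_cast hi.le) huniq)
      (hK.continuousOn_iteratedDerivWithin (by exact_mod_cast hij) huniq)
      (fun x hx => by
        have hdiff : DifferentiableOn ℝ (iteratedDerivWithin i K (Set.Icc 0 (2*π)))
            (Set.Icc 0 (2*π)) :=
          hK.differentiableOn_iteratedDerivWithin (by exact_mod_cast hi) huniq
        have hxmem : x ∈ Set.Icc (0:ℝ) (2*π) := Set.Ioo_subset_Icc_self hx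
        have hw : HasDerivWithinAt (iteratedDerivWithin i K (Set.Icc 0 (2*π)))
            (iteratedDerivWithin (i+1) K (Set.Icc 0 (2*π)) x) (Set.Icc 0 (2*π)) x := by
          rw [iteratedDerivWithin_succ]
          exact (hdiff x hxmem).hasDerivWithinAt
        exact hw.hasDerivAt (Icc_mem_nhds hx.1 hx.2))
      (hper i (Nat.le_sub_one_of_lt hi)) n
    have := ih (hi.le)
    calc (Complex.I*↑n)^(i+1) * ∫ t in (0:ℝ)..(2*π), Complex.exp (Complex.I*n*t) * K t
        = (Complex.I*↑n) * ((Complex.I*↑n)^i * ∫ t in (0:ℝ)..(2*π),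
            Complex.exp (Complex.I*n*t) * K t) := by ring
      _ = (-1)^i * ((Complex.I*↑n) * ∫ t in (0:ℝ)..(2*π), Complex.exp (Complex.I*n*t)
            * iteratedDerivWithin i K (Set.Icc 0 (2*π)) t) := by rw [this]; ring
      _ = (-1)^(i+1) * ∫ t in (0:ℝ)..(2*π), Complex.exp (Complex.I*n*t)
            * iteratedDerivWithin (i+1) K (Set.Icc 0 (2*π)) t := by rw [step]; ring

lemma decayA (K : ℝ → ℂ) (j : ℕ) (hj : 1 ≤ j)
    (hK : ContDiffOn ℝ j K (Set.Icc 0 (2 * π)))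
    (hper : ∀ i : ℕ, i ≤ j - 1 →
      iteratedDerivWithin i K (Set.Icc 0 (2 * π)) 0 =
        iteratedDerivWithin i K (Set.Icc 0 (2 * π)) (2 * π)) :
    Tendsto (fun n : ℤ => (|n| : ℝ) ^ j * ‖aCoeff K n‖) cofinite (nhds 0) := by
  have huniq : UniqueDiffOn ℝ (Set.Icc (0:ℝ) (2*π)) := uniqueDiffOn_Icc (by positivity)
  set g : ℝ → ℂ := iteratedDerivWithin j K (Set.Icc 0 (2*π)) with hg
  have hgc : ContinuousOn g (Set.Icc 0 (2*π)) :=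
    hK.continuousOn_iteratedDerivWithin le_rfl huniq
  have heq : (fun n : ℤ => (|n| : ℝ) ^ j * ‖aCoeff K n‖)
      = fun n : ℤ => (Real.sqrt (2*π))⁻¹
          * ‖∫ t in (0:ℝ)..(2*π), Complex.exp (Complex.I*n*t) * g t‖ := by
    funext n
    have key := iterA K j hj hK hper n j le_rfl
    have habs : ‖(Complex.I*n)^j
        * ∫ t in (0:ℝ)..(2*π), Complex.exp (Complex.I*n*t) * K t‖
        = ‖(-1:ℂ)^j * ∫ t in (0:ℝ)..(2*π), Complex.exp (Complex.I*n*t) * g t‖ := by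
      rw [key]
    rw [norm_mul, norm_mul, norm_pow, norm_pow] at habs
    simp only [norm_mul, Complex.norm_I, Complex.norm_intCast, one_mul, norm_neg, norm_one,
      one_pow] at habs
    rw [aCoeff, norm_mul]
    have hs : ‖(((Real.sqrt (2*π))⁻¹ : ℝ) : ℂ)‖ = (Real.sqrt (2*π))⁻¹ := by
      rw [Complex.norm_real, Real.norm_eq_abs, _root_.abs_of_nonneg (by positivity)]
    rw [hs]
    push_cast
    rw [← habs]
    ring
  rw [heq]
  have := ((RL g).norm).const_mul ((Real.sqrt (2*π))⁻¹)
  simpa using this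

lemma abs_exp_I_int_mul (n : ℤ) (t : ℝ) :
    ‖Complex.exp (Complex.I*(n:ℂ)*(t:ℂ))‖ = 1 := by
  rw [Complex.norm_exp]
  simp [Complex.mul_re]

lemma contK_mul (K : ℝ → ℂ) (hKc : ContinuousOn K (Set.Icc 0 (2*π))) (c : ℂ) (w : ℂ) :
    ContinuousOn (fun t : ℝ => Complex.exp (c * w * (t:ℂ)) * K t) (Set.Icc 0 (2*π)) :=
  (Continuous.cexp (by continuity)).continuousOn.mul hKc

lemma Tlip (K : ℝ → ℂ) (hKc : ContinuousOn K (Set.Icc 0 (2*π))) (n : ℤ) (R : ℝ) (hR : 0 ≤ R)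
    {ε₁ ε₂ : ℂ} (h1 : ‖ε₁‖ ≤ R) (h2 : ‖ε₂‖ ≤ R) :
    ‖(ε₁ + Phi K ((n:ℂ)+ε₁) / (2*π*Complex.I))
        - (ε₂ + Phi K ((n:ℂ)+ε₂) / (2*π*Complex.I))‖
      ≤ ((2*π*R) * Real.exp (2*π*R) * (1 + ∫ t in (0:ℝ)..(2*π), ‖K t‖)
          + ‖∫ t in (0:ℝ)..(2*π), Complex.exp (Complex.I*(n:ℂ)*(t:ℂ)) * ((t:ℂ) * K t)‖ / (2*π))
        * ‖ε₁ - ε₂‖ := by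
  have hπ : (0:ℝ) < π := Real.pi_pos
  set M : ℝ := ∫ t in (0:ℝ)..(2*π), ‖K t‖ with hM
  set b : ℂ := ∫ t in (0:ℝ)..(2*π), Complex.exp (Complex.I*(n:ℂ)*(t:ℂ)) * ((t:ℂ) * K t) with hb
  set ρ : ℝ := 2*π*R with hρdef
  have hρ : 0 ≤ ρ := by positivity
  have hMnn : 0 ≤ M := intervalIntegral.integral_nonneg (by positivity)
    (fun t _ => (norm_nonneg _))
  -- expansion of Phi at n + ε
  have hPhi : ∀ ε : ℂ, Phi K ((n:ℂ)+ε)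
      = 1 - Complex.exp (2*(π:ℂ)*Complex.I*ε)
        + Complex.I * ∫ t in (0:ℝ)..(2*π), Complex.exp (Complex.I*((n:ℂ)+ε)*(t:ℂ)) * K t := by
    intro ε
    rw [Phi]
    congr 2
    have harg : 2*(π:ℂ)*Complex.I*((n:ℂ)+ε) = (n:ℂ) * (2*(π:ℂ)*Complex.I) + 2*(π:ℂ)*Complex.I*ε := by
      ring
    rw [harg, Complex.exp_add, Complex.exp_int_mul_two_pi_mul_I, one_mul]
  -- integrability facts
  have hintK : ∀ w : ℂ, IntervalIntegrable
      (fun t : ℝ => Complex.exp (Complex.I * w * (t:ℂ)) * K t) volume 0 (2*π) :=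
    fun w => (contK_mul K hKc Complex.I w).intervalIntegrable_of_Icc (by positivity)
  have habsK : IntervalIntegrable (fun t : ℝ => ‖K t‖) volume 0 (2*π) :=
    (hKc.norm.congr (fun t _ => rfl)).intervalIntegrable_of_Icc (by positivity)
  -- difference of the H-integrals
  set D : ℝ → ℂ := fun t => Complex.exp (Complex.I*(n:ℂ)*(t:ℂ))
      * ((Complex.exp (Complex.I*ε₁*(t:ℂ)) - Complex.exp (Complex.I*ε₂*(t:ℂ))
          - Complex.I*(ε₁-ε₂)*(t:ℂ)) * K t) with hD
  have hDcont : ContinuousOn D (Set.Icc 0 (2*π)) := by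
    apply ContinuousOn.mul
    · exact (Continuous.cexp (by continuity)).continuousOn
    · exact (((Continuous.cexp (by continuity)).sub (Continuous.cexp (by continuity))).sub
        (by continuity)).continuousOn.mul hKc
  have hDint : IntervalIntegrable D volume 0 (2*π) :=
    hDcont.intervalIntegrable_of_Icc (by positivity)
  have htKcont : ContinuousOn (fun t : ℝ => Complex.exp (Complex.I*(n:ℂ)*(t:ℂ)) * ((t:ℂ) * K t))
      (Set.Icc 0 (2*π)) :=
    (Continuous.cexp (by continuity)).continuousOn.mul ((by continuity : Continuous
      (fun t : ℝ => ((t:ℝ):ℂ))).continuousOn.mul hKc)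
  have htKint : IntervalIntegrable (fun t : ℝ => Complex.exp (Complex.I*(n:ℂ)*(t:ℂ)) * ((t:ℂ) * K t))
      volume 0 (2*π) := htKcont.intervalIntegrable_of_Icc (by positivity)
  have hHdiff : (∫ t in (0:ℝ)..(2*π), Complex.exp (Complex.I*((n:ℂ)+ε₁)*(t:ℂ)) * K t)
      - (∫ t in (0:ℝ)..(2*π), Complex.exp (Complex.I*((n:ℂ)+ε₂)*(t:ℂ)) * K t)
      = (∫ t in (0:ℝ)..(2*π), D t) + Complex.I*(ε₁-ε₂)*b := by
    rw [← intervalIntegral.integral_sub (hintK ((n:ℂ)+ε₁)) (hintK ((n:ℂ)+ε₂))]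
    have hpt : ∀ t : ℝ, Complex.exp (Complex.I*((n:ℂ)+ε₁)*(t:ℂ)) * K t
        - Complex.exp (Complex.I*((n:ℂ)+ε₂)*(t:ℂ)) * K t
        = D t + Complex.I*(ε₁-ε₂) * (Complex.exp (Complex.I*(n:ℂ)*(t:ℂ)) * ((t:ℂ) * K t)) := by
      intro t
      have he1 : Complex.exp (Complex.I*((n:ℂ)+ε₁)*(t:ℂ))
          = Complex.exp (Complex.I*(n:ℂ)*(t:ℂ)) * Complex.exp (Complex.I*ε₁*(t:ℂ)) := by
        rw [← Complex.exp_add]; ring_nf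
      have he2 : Complex.exp (Complex.I*((n:ℂ)+ε₂)*(t:ℂ))
          = Complex.exp (Complex.I*(n:ℂ)*(t:ℂ)) * Complex.exp (Complex.I*ε₂*(t:ℂ)) := by
        rw [← Complex.exp_add]; ring_nf
      rw [he1, he2, hD]
      ring
    rw [intervalIntegral.integral_congr (fun t _ => hpt t),
      intervalIntegral.integral_add hDint (by
        simpa using htKint.const_mul (Complex.I*(ε₁-ε₂))),
      intervalIntegral.integral_const_mul]
  -- key algebraic identity
  have hne2 : (2*(π:ℂ)*Complex.I) ≠ 0 := by
    simp [Complex.I_ne_zero, Real.pi_ne_zero, Complex.ofReal_ne_zero]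
  have hkey : (2*(π:ℂ)*Complex.I) * ((ε₁ + Phi K ((n:ℂ)+ε₁) / (2*π*Complex.I))
        - (ε₂ + Phi K ((n:ℂ)+ε₂) / (2*π*Complex.I)))
      = -(Complex.exp (2*(π:ℂ)*Complex.I*ε₁) - Complex.exp (2*(π:ℂ)*Complex.I*ε₂)
          - (2*(π:ℂ)*Complex.I*ε₁ - 2*(π:ℂ)*Complex.I*ε₂))
        + Complex.I*(∫ t in (0:ℝ)..(2*π), D t) + Complex.I*(Complex.I*(ε₁-ε₂)*b) := by
    rw [hPhi ε₁, hPhi ε₂]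
    field_simp
    linear_combination Complex.I * hHdiff
  have habs2πI : ‖2*(π:ℂ)*Complex.I‖ = 2*π := by
    simp [norm_mul, Complex.norm_real, Real.norm_eq_abs, _root_.abs_of_nonneg Real.pi_pos.le]
  -- term 1
  have habsa : ∀ ε : ℂ, ‖ε‖ ≤ R → ‖2*(π:ℂ)*Complex.I*ε‖ ≤ ρ := by
    intro ε hε
    rw [norm_mul, habs2πI, hρdef]
    have : 2*π*‖ε‖ ≤ 2*π*R := by nlinarith
    linarith
  have hterm1 : ‖Complex.exp (2*(π:ℂ)*Complex.I*ε₁)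
        - Complex.exp (2*(π:ℂ)*Complex.I*ε₂)
        - (2*(π:ℂ)*Complex.I*ε₁ - 2*(π:ℂ)*Complex.I*ε₂)‖
      ≤ ρ * Real.exp ρ * (2*π*‖ε₁-ε₂‖) := by
    have h := exp_taylor hρ (habsa ε₁ h1) (habsa ε₂ h2)
    have hd : ‖2*(π:ℂ)*Complex.I*ε₁ - 2*(π:ℂ)*Complex.I*ε₂‖
        = 2*π*‖ε₁-ε₂‖ := by
      have : 2*(π:ℂ)*Complex.I*ε₁ - 2*(π:ℂ)*Complex.I*ε₂ = (2*(π:ℂ)*Complex.I)*(ε₁-ε₂) := by ring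
      rw [this, norm_mul, habs2πI]
    rw [hd] at h
    exact h
  -- term 2
  have hterm2 : ‖∫ t in (0:ℝ)..(2*π), D t‖
      ≤ (ρ * Real.exp ρ * (2*π*‖ε₁-ε₂‖)) * M := by
    have hbd : ∀ᵐ t ∂(volume.restrict (Set.uIoc (0:ℝ) (2*π))),
        ‖D t‖ ≤ (ρ * Real.exp ρ * (2*π*‖ε₁-ε₂‖)) * ‖K t‖ := by
      filter_upwards [ae_restrict_mem measurableSet_uIoc] with t ht
      rw [Set.uIoc_of_le (by positivity : (0:ℝ) ≤ 2*π)] at ht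
      obtain ⟨ht0, ht2⟩ := ht
      have hrem : ‖Complex.exp (Complex.I*ε₁*(t:ℂ)) - Complex.exp (Complex.I*ε₂*(t:ℂ))
          - Complex.I*(ε₁-ε₂)*(t:ℂ)‖
          ≤ ρ * Real.exp ρ * (2*π*‖ε₁-ε₂‖) := by
        have hsub : Complex.I*(ε₁-ε₂)*(t:ℂ) = Complex.I*ε₁*(t:ℂ) - Complex.I*ε₂*(t:ℂ) := by ring
        rw [hsub]
        have haux : ∀ ε : ℂ, ‖ε‖ ≤ R → ‖Complex.I*ε*(t:ℂ)‖ ≤ ρ := by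
          intro ε hε
          rw [norm_mul, norm_mul, Complex.norm_I, one_mul, Complex.norm_real, Real.norm_eq_abs,
            _root_.abs_of_nonneg ht0.le, hρdef]
          nlinarith
        have h := exp_taylor hρ (haux ε₁ h1) (haux ε₂ h2)
        have hd : ‖Complex.I*ε₁*(t:ℂ) - Complex.I*ε₂*(t:ℂ)‖
            ≤ 2*π*‖ε₁-ε₂‖ := by
          have : Complex.I*ε₁*(t:ℂ) - Complex.I*ε₂*(t:ℂ) = (Complex.I*(t:ℂ))*(ε₁-ε₂) := by ring
          rw [this, norm_mul, norm_mul, Complex.norm_I, one_mul, Complex.norm_real, Real.norm_eq_abs,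
            _root_.abs_of_nonneg ht0.le]
          nlinarith [norm_nonneg (ε₁-ε₂)]
        calc ‖Complex.exp (Complex.I*ε₁*(t:ℂ)) - Complex.exp (Complex.I*ε₂*(t:ℂ))
              - (Complex.I*ε₁*(t:ℂ) - Complex.I*ε₂*(t:ℂ))‖
            ≤ ρ * Real.exp ρ * ‖Complex.I*ε₁*(t:ℂ) - Complex.I*ε₂*(t:ℂ)‖ := h
          _ ≤ ρ * Real.exp ρ * (2*π*‖ε₁-ε₂‖) := by
              have : 0 ≤ ρ * Real.exp ρ := by positivity
              nlinarith
      have : ‖D t‖ = ‖Complex.exp (Complex.I*ε₁*(t:ℂ))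
          - Complex.exp (Complex.I*ε₂*(t:ℂ)) - Complex.I*(ε₁-ε₂)*(t:ℂ)‖ * ‖K t‖ := by
        rw [hD]
        simp only [norm_mul, abs_exp_I_int_mul, one_mul]
      rw [this]
      exact mul_le_mul_of_nonneg_right hrem (norm_nonneg _)
    have := intervalIntegral.norm_integral_le_of_norm_le (by positivity : (0:ℝ) ≤ 2*π)
      (by rw [← Set.uIoc_of_le (by positivity : (0:ℝ) ≤ 2*π)]
          exact (ae_restrict_iff' measurableSet_uIoc).mp hbd)
      (habsK.const_mul (ρ * Real.exp ρ * (2*π*‖ε₁-ε₂‖)))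
    rw [intervalIntegral.integral_const_mul] at this
    have habs' : |ρ * Real.exp ρ * (2*π*‖ε₁-ε₂‖) * M|
        = ρ * Real.exp ρ * (2*π*‖ε₁-ε₂‖) * M :=
      _root_.abs_of_nonneg (mul_nonneg (by positivity) hMnn)
    exact this
  -- combine
  have hchain : 2*π*‖(ε₁ + Phi K ((n:ℂ)+ε₁) / (2*π*Complex.I))
        - (ε₂ + Phi K ((n:ℂ)+ε₂) / (2*π*Complex.I))‖
      ≤ ρ * Real.exp ρ * (2*π*‖ε₁-ε₂‖)
        + (ρ * Real.exp ρ * (2*π*‖ε₁-ε₂‖)) * M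
        + ‖ε₁-ε₂‖ * ‖b‖ := by
    have h0 : 2*π*‖(ε₁ + Phi K ((n:ℂ)+ε₁) / (2*π*Complex.I))
        - (ε₂ + Phi K ((n:ℂ)+ε₂) / (2*π*Complex.I))‖
        = ‖(2*(π:ℂ)*Complex.I) * ((ε₁ + Phi K ((n:ℂ)+ε₁) / (2*π*Complex.I))
          - (ε₂ + Phi K ((n:ℂ)+ε₂) / (2*π*Complex.I)))‖ := by
      rw [norm_mul, habs2πI]
    rw [h0, hkey]
    have t3 : ‖Complex.I*(Complex.I*(ε₁-ε₂)*b)‖ = ‖ε₁-ε₂‖ * ‖b‖ := by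
      simp [norm_mul]
    calc ‖-(Complex.exp (2*(π:ℂ)*Complex.I*ε₁) - Complex.exp (2*(π:ℂ)*Complex.I*ε₂)
          - (2*(π:ℂ)*Complex.I*ε₁ - 2*(π:ℂ)*Complex.I*ε₂))
        + Complex.I*(∫ t in (0:ℝ)..(2*π), D t) + Complex.I*(Complex.I*(ε₁-ε₂)*b)‖
        ≤ ‖-(Complex.exp (2*(π:ℂ)*Complex.I*ε₁) - Complex.exp (2*(π:ℂ)*Complex.I*ε₂)
            - (2*(π:ℂ)*Complex.I*ε₁ - 2*(π:ℂ)*Complex.I*ε₂))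
          + Complex.I*(∫ t in (0:ℝ)..(2*π), D t)‖ + ‖Complex.I*(Complex.I*(ε₁-ε₂)*b)‖ :=
          norm_add_le _ _
      _ ≤ ‖-(Complex.exp (2*(π:ℂ)*Complex.I*ε₁) - Complex.exp (2*(π:ℂ)*Complex.I*ε₂)
            - (2*(π:ℂ)*Complex.I*ε₁ - 2*(π:ℂ)*Complex.I*ε₂))‖
          + ‖Complex.I*(∫ t in (0:ℝ)..(2*π), D t)‖
          + ‖Complex.I*(Complex.I*(ε₁-ε₂)*b)‖ := by
          have := norm_add_le (-(Complex.exp (2*(π:ℂ)*Complex.I*ε₁)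
            - Complex.exp (2*(π:ℂ)*Complex.I*ε₂)
            - (2*(π:ℂ)*Complex.I*ε₁ - 2*(π:ℂ)*Complex.I*ε₂)))
            (Complex.I*(∫ t in (0:ℝ)..(2*π), D t))
          linarith
      _ ≤ ρ * Real.exp ρ * (2*π*‖ε₁-ε₂‖)
          + (ρ * Real.exp ρ * (2*π*‖ε₁-ε₂‖)) * M
          + ‖ε₁-ε₂‖ * ‖b‖ := by
          rw [norm_neg, t3]
          have t2' : ‖Complex.I*(∫ t in (0:ℝ)..(2*π), D t)‖
              = ‖∫ t in (0:ℝ)..(2*π), D t‖ := by simp [norm_mul]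
          rw [t2']
          linarith [hterm1, hterm2]
  have hfield : 2*π*((ρ*Real.exp ρ*(1+M) + ‖b‖/(2*π))*‖ε₁-ε₂‖)
      = ρ*Real.exp ρ*(2*π*‖ε₁-ε₂‖) + (ρ*Real.exp ρ*(2*π*‖ε₁-ε₂‖))*M
        + ‖ε₁-ε₂‖*‖b‖ := by
    field_simp
  have hfin : 2*π*‖(ε₁ + Phi K ((n:ℂ)+ε₁) / (2*π*Complex.I))
        - (ε₂ + Phi K ((n:ℂ)+ε₂) / (2*π*Complex.I))‖
      ≤ 2*π*((ρ*Real.exp ρ*(1+M) + ‖b‖/(2*π))*‖ε₁-ε₂‖) := by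
    rw [hfield]; exact hchain
  have h2πpos : (0:ℝ) < 2*π := by positivity
  calc ‖(ε₁ + Phi K ((n:ℂ)+ε₁) / (2*π*Complex.I))
        - (ε₂ + Phi K ((n:ℂ)+ε₂) / (2*π*Complex.I))‖
      ≤ (ρ*Real.exp ρ*(1+M) + ‖b‖/(2*π))*‖ε₁-ε₂‖ :=
        le_of_mul_le_mul_left hfin h2πpos
    _ = (ρ * Real.exp ρ * (1 + M) + ‖b‖ / (2*π)) * ‖ε₁ - ε₂‖ := by ring

lemma exists_lam (K : ℝ → ℂ) (hKc : ContinuousOn K (Set.Icc 0 (2*π))) (n : ℤ)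
    (hL : 2*π*‖aCoeff K n‖ * Real.exp (2*π*‖aCoeff K n‖)
        * (1 + ∫ t in (0:ℝ)..(2*π), ‖K t‖)
      + ‖∫ t in (0:ℝ)..(2*π), Complex.exp (Complex.I*(n:ℂ)*(t:ℂ)) * ((t:ℂ) * K t)‖ / (2*π)
      ≤ 1/2) :
    ∃ ε : ℂ, ‖ε‖ ≤ ‖aCoeff K n‖ ∧ Phi K ((n:ℂ)+ε) = 0 ∧
      ∀ μ : ℂ, ‖μ - n‖ < ‖aCoeff K n‖ → Phi K μ = 0 → μ = (n:ℂ) + ε := by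
  have hπ : (0:ℝ) < π := Real.pi_pos
  set r : ℝ := ‖aCoeff K n‖ with hr
  have hrnn : 0 ≤ r := norm_nonneg _
  set T : ℂ → ℂ := fun ε => ε + Phi K ((n:ℂ)+ε) / (2*π*Complex.I) with hT
  have hne2 : (2*(π:ℂ)*Complex.I) ≠ 0 := by
    simp [Complex.I_ne_zero, Real.pi_ne_zero, Complex.ofReal_ne_zero]
  -- Lipschitz 1/2 on the closed ball
  have hlip : ∀ ε₁ ε₂ : ℂ, ‖ε₁‖ ≤ r → ‖ε₂‖ ≤ r →
      ‖T ε₁ - T ε₂‖ ≤ (1/2) * ‖ε₁ - ε₂‖ := by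
    intro ε₁ ε₂ h1 h2
    refine (Tlip K hKc n r hrnn h1 h2).trans ?_
    exact mul_le_mul_of_nonneg_right hL (norm_nonneg _)
  -- value at 0
  have hsqrt_pos : 0 < Real.sqrt (2*π) := Real.sqrt_pos.2 (by positivity)
  have hA : ‖∫ t in (0:ℝ)..(2*π), Complex.exp (Complex.I*(n:ℂ)*(t:ℂ)) * K t‖
      = Real.sqrt (2*π) * r := by
    have : aCoeff K n = ((Real.sqrt (2*π) : ℝ) : ℂ)⁻¹
        * ∫ t in (0:ℝ)..(2*π), Complex.exp (Complex.I*(n:ℂ)*(t:ℂ)) * K t := by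
      rw [aCoeff]; norm_num
    rw [hr, this, norm_mul, norm_inv, Complex.norm_real, Real.norm_eq_abs,
      _root_.abs_of_nonneg hsqrt_pos.le]
    field_simp
  have hPhin : Phi K ((n:ℂ)+0) = Complex.I
      * ∫ t in (0:ℝ)..(2*π), Complex.exp (Complex.I*(n:ℂ)*(t:ℂ)) * K t := by
    rw [add_zero, Phi]
    have harg : 2*(π:ℂ)*Complex.I*(n:ℂ) = (n:ℂ) * (2*(π:ℂ)*Complex.I) := by ring
    rw [harg, Complex.exp_int_mul_two_pi_mul_I]
    push_cast
    ring_nf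
  have hT0 : ‖T 0‖ = r / Real.sqrt (2*π) := by
    have h2π : Real.sqrt (2*π) * Real.sqrt (2*π) = 2*π := Real.mul_self_sqrt (by positivity)
    rw [hT]
    simp only [zero_add]
    rw [norm_div, hPhin, norm_mul, Complex.norm_I, one_mul, hA]
    have habs2πI : ‖2*(π:ℂ)*Complex.I‖ = 2*π := by
      simp [norm_mul, Complex.norm_real, Real.norm_eq_abs, _root_.abs_of_nonneg Real.pi_pos.le]
    rw [habs2πI]
    rw [div_eq_div_iff (by positivity : (0:ℝ) < 2*π).ne' hsqrt_pos.ne']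
    nlinarith
  have hsqrt2 : (2:ℝ) ≤ Real.sqrt (2*π) := by
    have : (2:ℝ) = Real.sqrt 4 := by
      rw [show (4:ℝ) = 2^2 by norm_num, Real.sqrt_sq (by norm_num)]
    rw [this]
    exact Real.sqrt_le_sqrt (by nlinarith [Real.pi_gt_three])
  have hT0le : ‖T 0‖ ≤ r / 2 := by
    rw [hT0]
    exact div_le_div_of_nonneg_left hrnn (by norm_num) hsqrt2 |>.trans_eq rfl
  -- self map
  have hself : ∀ ε : ℂ, ‖ε‖ ≤ r → ‖T ε‖ ≤ r := by
    intro ε hε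
    have h1 := hlip ε 0 hε (by simpa using hrnn)
    have h2 : ‖T ε‖ ≤ ‖T ε - T 0‖ + ‖T 0‖ := by
      have := norm_add_le (T ε - T 0) (T 0)
      simpa using this
    simp only [sub_zero] at h1
    linarith
  -- the contraction on the closed ball
  set s : Set ℂ := Metric.closedBall (0:ℂ) r with hs
  have hmem : ∀ z : ℂ, z ∈ s ↔ ‖z‖ ≤ r := by
    intro z
    rw [hs, Metric.mem_closedBall, Complex.dist_eq, sub_zero]
  have hsc : IsComplete s := Metric.isClosed_closedBall.isComplete
  have hsf : Set.MapsTo T s s := fun z hz => (hmem _).2 (hself z ((hmem _).1 hz))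
  have hcontr : ContractingWith (1/2 : NNReal) (hsf.restrict T s s) := by
    constructor
    · rw [← NNReal.coe_lt_coe]
      norm_num
    · apply LipschitzWith.of_dist_le_mul
      rintro ⟨x, hx⟩ ⟨y, hy⟩
      have := hlip x y ((hmem _).1 hx) ((hmem _).1 hy)
      simp only [Set.MapsTo.restrict, Subtype.dist_eq, Complex.dist_eq]
      push_cast
      simpa [Subtype.map] using this
  obtain ⟨y, hys, hfix, -, -⟩ := hcontr.exists_fixedPoint' hsc hsf
    ((hmem 0).2 (by simpa using hrnn)) (edist_ne_top _ _)
  refine ⟨y, (hmem y).1 hys, ?_, ?_⟩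
  · have h := hfix
    rw [Function.IsFixedPt, hT] at h
    have h' : y + Phi K ((n:ℂ)+y) / (2*(π:ℂ)*Complex.I) = y := h
    have h0 : Phi K ((n:ℂ)+y) / (2*(π:ℂ)*Complex.I) = 0 := by
      have := congrArg (fun z => z - y) h'
      simpa using this
    field_simp at h0
    simpa using h0
  · intro μ hμ hΦ
    set x : ℂ := μ - (n:ℂ) with hx
    have hxs : ‖x‖ ≤ r := hμ.le
    have hxfix : T x = x := by
      rw [hT, hx]
      have : (n:ℂ) + (μ - (n:ℂ)) = μ := by ring
      simp only [this, hΦ, zero_div, add_zero]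
    have hyfix : T y = y := hfix
    have hd := hlip x y hxs ((hmem y).1 hys)
    rw [hxfix, hyfix] at hd
    have : ‖x - y‖ = 0 := by linarith [norm_nonneg (x - y)]
    have hxy : x = y := sub_eq_zero.mp (norm_eq_zero.mp this)
    have hfin : μ = (n:ℂ) + x := by rw [hx]; ring
    rw [hxy] at hfin
    exact hfin

/-- Corollary (decay of the localization radii): if `K` is `j` times continuously
differentiable on `[0,2π]` with `K^{(i)}(0) = K^{(i)}(2π)` for `0 ≤ i ≤ j − 1`, then
`|n|^j |aₙ(K)| → 0`; consequently there are zeros `λₙ` of `Φ` with `|λₙ − n| ≤ |aₙ(K)|`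
(unique in the corresponding disk, resp. `λₙ = n` when `aₙ(K) = 0`), and
`|n|^j |λₙ − n| → 0` as `|n| → ∞`. -/
theorem radii_decay_of_smooth_K
    (K : ℝ → ℂ) (j : ℕ) (hj : 1 ≤ j)
    (hK : ContDiffOn ℝ j K (Set.Icc 0 (2 * Real.pi)))
    (hper : ∀ i : ℕ, i ≤ j - 1 →
      iteratedDerivWithin i K (Set.Icc 0 (2 * Real.pi)) 0 =
        iteratedDerivWithin i K (Set.Icc 0 (2 * Real.pi)) (2 * Real.pi)) :
    Tendsto (fun n : ℤ => (|n| : ℝ) ^ j * ‖aCoeff K n‖) cofinite (nhds 0) ∧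
    ∃ (N : ℕ) (lam : ℤ → ℂ),
      (∀ n : ℤ, (N : ℤ) ≤ |n| →
        Phi K (lam n) = 0 ∧
        ‖lam n - n‖ ≤ ‖aCoeff K n‖ ∧
        (aCoeff K n ≠ 0 →
          ∀ μ : ℂ, ‖μ - n‖ < ‖aCoeff K n‖ → Phi K μ = 0 → μ = lam n) ∧
        (aCoeff K n = 0 → lam n = n)) ∧
      Tendsto (fun n : ℤ => (|n| : ℝ) ^ j * ‖lam n - n‖) cofinite (nhds 0) := by
  have hπ : (0:ℝ) < π := Real.pi_pos
  have hdec := decayA K j hj hK hper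
  have hKc : ContinuousOn K (Set.Icc 0 (2*π)) := hK.continuousOn
  refine ⟨hdec, ?_⟩
  set r : ℤ → ℝ := fun n => ‖aCoeff K n‖ with hrdef
  have hrnn : ∀ n, 0 ≤ r n := fun n => norm_nonneg _
  -- r tends to zero
  have hr0 : Tendsto r cofinite (nhds 0) := by
    apply squeeze_zero' (g := fun n : ℤ => (|n| : ℝ) ^ j * ‖aCoeff K n‖)
      (Filter.Eventually.of_forall hrnn) ?_ hdec
    filter_upwards [Filter.eventually_cofinite_ne (0:ℤ)] with n hn
    have h2 : (1:ℝ) ≤ (|n| : ℝ) := by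
      have : (1:ℤ) ≤ |n| := Int.one_le_abs (by omega)
      exact_mod_cast this
    have h1 : (1:ℝ) ≤ (|n| : ℝ) ^ j := one_le_pow₀ h2
    nlinarith [hrnn n]
  -- b tends to zero
  set b : ℤ → ℂ := fun n => ∫ t in (0:ℝ)..(2*π),
      Complex.exp (Complex.I*(n:ℂ)*(t:ℂ)) * ((t:ℂ) * K t) with hbdef
  have hb0 : Tendsto (fun n => ‖b n‖) cofinite (nhds 0) := by
    have := (RL (fun t : ℝ => (t:ℂ) * K t)).norm
    simpa using this
  -- the Lipschitz bound tends to zero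
  set M : ℝ := ∫ t in (0:ℝ)..(2*π), ‖K t‖ with hMdef
  set L : ℤ → ℝ := fun n => 2*π*(r n) * Real.exp (2*π*(r n)) * (1 + M)
      + ‖b n‖ / (2*π) with hLdef
  have hL0 : Tendsto L cofinite (nhds 0) := by
    have hc : Continuous (fun x : ℝ => 2*π*x * Real.exp (2*π*x) * (1+M)) := by continuity
    have h1 : Tendsto (fun n => 2*π*(r n) * Real.exp (2*π*(r n)) * (1+M)) cofinite
        (nhds (2*π*0 * Real.exp (2*π*0) * (1+M))) := (hc.tendsto 0).comp hr0
    have h2 : Tendsto (fun n => ‖b n‖ / (2*π)) cofinite (nhds (0 / (2*π))) :=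
      hb0.div_const _
    have h3 := h1.add h2
    have h4 : 2*π*0 * Real.exp (2*π*0) * (1+M) + 0 / (2*π) = 0 := by norm_num
    rw [h4] at h3
    exact h3
  have hev : ∀ᶠ n in cofinite, L n ≤ 1/2 :=
    hL0.eventually (eventually_le_nhds (by norm_num : (0:ℝ) < 1/2))
  -- choose N
  have hfin : {n : ℤ | ¬ L n ≤ 1/2}.Finite := Filter.eventually_cofinite.mp hev
  set N : ℕ := hfin.toFinset.sup (fun n => n.natAbs) + 1 with hNdef
  have hN : ∀ n : ℤ, (N:ℤ) ≤ |n| → L n ≤ 1/2 := by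
    intro n hn
    by_contra hcon
    have hmem : n ∈ hfin.toFinset := hfin.mem_toFinset.mpr hcon
    have hsup : n.natAbs ≤ hfin.toFinset.sup (fun n => n.natAbs) :=
      Finset.le_sup (f := fun n : ℤ => n.natAbs) hmem
    have hNgt : n.natAbs < N := by rw [hNdef]; omega
    rw [Int.abs_eq_natAbs] at hn
    have : N ≤ n.natAbs := by exact_mod_cast hn
    omega
  -- the zeros
  set lam : ℤ → ℂ := fun n =>
    if h : L n ≤ 1/2 then (n:ℂ) + Classical.choose (exists_lam K hKc n h) else (n:ℂ) with hlam
  have hlamspec : ∀ n : ℤ, (N:ℤ) ≤ |n| →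
      ‖lam n - n‖ ≤ r n ∧ Phi K (lam n) = 0 ∧
      (∀ μ : ℂ, ‖μ - n‖ < r n → Phi K μ = 0 → μ = lam n) := by
    intro n hn
    have h := hN n hn
    have hspec := Classical.choose_spec (exists_lam K hKc n h)
    set ε := Classical.choose (exists_lam K hKc n h) with hε
    have hl : lam n = (n:ℂ) + ε := by
      simp only [hlam]
      rw [dif_pos h]
    refine ⟨?_, ?_, ?_⟩
    · rw [hl]
      simpa using hspec.1
    · rw [hl]; exact hspec.2.1
    · intro μ hμ hΦ
      rw [hl]
      exact hspec.2.2 μ hμ hΦ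
  refine ⟨N, lam, fun n hn => ?_, ?_⟩
  · obtain ⟨hb1, hb2, hb3⟩ := hlamspec n hn
    refine ⟨hb2, hb1, fun _ => hb3, ?_⟩
    · intro ha
      have hr00 : r n = 0 := by rw [hrdef]; simp [ha]
      have := hb1
      rw [hr00] at this
      have h0 : lam n - (n:ℂ) = 0 := norm_eq_zero.mp (le_antisymm this (norm_nonneg _))
      have := sub_eq_zero.mp h0
      exact this
  · apply squeeze_zero' (f := fun n : ℤ => (|n| : ℝ) ^ j * ‖lam n - n‖)
      (g := fun n : ℤ => (|n| : ℝ) ^ j * r n)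
    · exact Filter.Eventually.of_forall (fun n => by positivity)
    · have hevN : ∀ᶠ n : ℤ in cofinite, (N:ℤ) ≤ |n| := by
        rw [Filter.eventually_cofinite]
        apply Set.Finite.subset (Set.finite_Icc (-(N:ℤ)) (N:ℤ))
        intro n hn
        simp only [Set.mem_setOf_eq, not_le] at hn
        have := abs_lt.mp hn
        simp only [Set.mem_Icc]
        omega
      filter_upwards [hevN] with n hn
      exact mul_le_mul_of_nonneg_left (hlamspec n hn).1 (by positivity)
    · exact hdec
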